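/- Let c_{m,n}^{a,b} ∈ ℚ[q] denote the coefficient of the monomial x_1^{a_1}···x_m^{a_m} x_{m+1}^{b_1}···x_{m+n}^{b_n} in g_{m,n} = ∏_{s=m+1}^{m+n} ∏_{t=1}^{m} (x_s - q·x_t)^{d-1}, where a ∈ ℕ^m, b ∈ ℕ^n. Then for all positive integers l, m, n and all a ∈ ℕ^l, b ∈ ℕ^m, c ∈ ℕ^n: ∑_{a_1+a_2=a, b_1+b_2=b} c_{l,m}^{a_1,b_1} · c_{l+m,n}^{(a_2,b_2),c} = ∑_{c_1+c_2=c, b_1+b_2=b} c_{l,m+n}^{a,(b_2,c_2)} · c_{m,n}^{b_1,c_1}, where the sums range over all decompositions into nonnegative integer vectors. -/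

import Mathlib

open MvPolynomial Finset

noncomputable section

/-- The quantization variable `q` in `ℚ[q]`. -/
def qv : Polynomial ℚ := Polynomial.X

/-- The kernel polynomial `g_{m,n} = ∏_{s=m+1}^{m+n} ∏_{t=1}^{m} (x_s - q x_t)^{d-1}`,
with variables indexed by `ℕ` (indices `0,…,m-1` for the first group and
`m,…,m+n-1` for the second). -/
def gPoly (d m n : ℕ) : MvPolynomial ℕ (Polynomial ℚ) :=
  ∏ s ∈ Finset.Ico m (m + n), ∏ t ∈ Finset.range m, (X s - C qv * X t) ^ (d - 1)

/-- The exponent vector `x_1^{a_1} ⋯ x_m^{a_m} x_{m+1}^{b_1} ⋯ x_{m+n}^{b_n}`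
as a finitely supported function on the variable indices. -/
def expo {m n : ℕ} (a : Fin m → ℕ) (b : Fin n → ℕ) : ℕ →₀ ℕ :=
  (∑ i : Fin m, Finsupp.single (i : ℕ) (a i)) +
    (∑ j : Fin n, Finsupp.single (m + (j : ℕ)) (b j))

/-- The coefficient `c_{m,n}^{a,b}` of the monomial `x^{(a,b)}` in `g_{m,n}`. -/
def cf (d m n : ℕ) (a : Fin m → ℕ) (b : Fin n → ℕ) : Polynomial ℚ :=
  MvPolynomial.coeff (expo a b) (gPoly d m n)

/-! ### Auxiliary lemmas -/

lemma expo_apply₁ {m n : ℕ} (a : Fin m → ℕ) (b : Fin n → ℕ) (i₀ : Fin m) :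
    expo a b (i₀ : ℕ) = a i₀ := by
  simp only [expo, Finsupp.add_apply, Finsupp.finset_sum_apply, Finsupp.single_apply]
  rw [Finset.sum_eq_single i₀, Finset.sum_eq_zero]
  · simp
  · intro j _; rw [if_neg (by omega)]
  · intro j _ hj; rw [if_neg (by simpa [Fin.val_inj] using hj)]
  · simp

lemma expo_apply₂ {m n : ℕ} (a : Fin m → ℕ) (b : Fin n → ℕ) (j₀ : Fin n) :
    expo a b (m + (j₀ : ℕ)) = b j₀ := by
  simp only [expo, Finsupp.add_apply, Finsupp.finset_sum_apply, Finsupp.single_apply]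
  rw [Finset.sum_eq_zero, Finset.sum_eq_single j₀]
  · simp
  · intro j _ hj; rw [if_neg (by simp [Fin.val_inj]; exact fun h => hj (by omega))]
  · simp
  · intro i _; rw [if_neg (by omega)]

lemma expo_apply₃ {m n : ℕ} (a : Fin m → ℕ) (b : Fin n → ℕ) {j : ℕ} (h : m + n ≤ j) :
    expo a b j = 0 := by
  simp only [expo, Finsupp.add_apply, Finsupp.finset_sum_apply, Finsupp.single_apply]
  rw [Finset.sum_eq_zero, Finset.sum_eq_zero]
  · simp
  · intro i _; rw [if_neg (by omega)]
  · intro i _; rw [if_neg (by omega)]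

lemma expo_add {m n : ℕ} (a a' : Fin m → ℕ) (b b' : Fin n → ℕ) :
    expo (a + a') (b + b') = expo a b + expo a' b' := by
  simp only [expo, Pi.add_apply, Finsupp.single_add, Finset.sum_add_distrib]
  abel

/-- The "tail" exponent vector supported on indices `p, p+1, …, p+n-1`. -/
def tailE (p : ℕ) {n : ℕ} (c : Fin n → ℕ) : ℕ →₀ ℕ := expo (0 : Fin p → ℕ) c

lemma tailE_def (p : ℕ) {n : ℕ} (c : Fin n → ℕ) :
    tailE p c = ∑ k : Fin n, Finsupp.single (p + (k : ℕ)) (c k) := by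
  simp [tailE, expo]

lemma tailE_apply_lt (p : ℕ) {n : ℕ} (c : Fin n → ℕ) {j : ℕ} (h : j < p) :
    tailE p c j = 0 := expo_apply₁ (0 : Fin p → ℕ) c ⟨j, h⟩

lemma tailE_apply₂ (p : ℕ) {n : ℕ} (c : Fin n → ℕ) (k : Fin n) :
    tailE p c (p + (k : ℕ)) = c k := expo_apply₂ _ _ _

lemma tailE_apply₃ (p : ℕ) {n : ℕ} (c : Fin n → ℕ) {j : ℕ} (h : p + n ≤ j) :
    tailE p c j = 0 := expo_apply₃ _ _ h

lemma tailE_add (p : ℕ) {n : ℕ} (c c' : Fin n → ℕ) :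
    tailE p (c + c') = tailE p c + tailE p c' := by
  rw [tailE, show (0 : Fin p → ℕ) = 0 + 0 from by simp, expo_add]
  rfl

lemma expo_append_left {l m n : ℕ} (x : Fin l → ℕ) (y : Fin m → ℕ) (z : Fin n → ℕ) :
    expo (Fin.append x y) z = expo x y + tailE (l + m) z := by
  rw [expo, expo, tailE_def, Fin.sum_univ_add]
  simp only [Fin.append_left, Fin.append_right, Fin.coe_castAdd, Fin.coe_natAdd]

lemma expo_append_right {l m n : ℕ} (x : Fin l → ℕ) (y : Fin m → ℕ) (z : Fin n → ℕ) :
    expo x (Fin.append y z) = expo x y + tailE (l + m) z := by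
  rw [expo, expo, tailE_def, Fin.sum_univ_add]
  simp only [Fin.append_left, Fin.append_right, Fin.coe_castAdd, Fin.coe_natAdd, add_assoc]

lemma mapDomain_expo {l m n : ℕ} (b : Fin m → ℕ) (c : Fin n → ℕ) :
    Finsupp.mapDomain (l + ·) (expo b c) = tailE l b + tailE (l + m) c := by
  rw [expo, tailE_def, tailE_def, Finsupp.mapDomain_add,
    Finsupp.mapDomain_finset_sum, Finsupp.mapDomain_finset_sum]
  simp [Finsupp.mapDomain_single, add_assoc]

/-- Generic lemma computing the coefficient of a product when the first factor's
possible exponents are parametrized by a finite set. -/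
lemma coeff_mul_eq_sum {R : Type*} [CommRing R] {ι : Type*} [DecidableEq ι]
    (S : Finset ι) (f : ι → (ℕ →₀ ℕ)) (E : ℕ →₀ ℕ) (P Q : MvPolynomial ℕ R)
    (hle : ∀ i ∈ S, f i ≤ E)
    (hinj : Set.InjOn f S)
    (hsurj : ∀ e ≤ E, MvPolynomial.coeff e P ≠ 0 → ∃ i ∈ S, f i = e) :
    MvPolynomial.coeff E (P * Q) =
      ∑ i ∈ S, MvPolynomial.coeff (f i) P * MvPolynomial.coeff (E - f i) Q := by
  rw [MvPolynomial.coeff_mul]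
  have himg : Finset.image (fun i => (f i, E - f i)) S ⊆ Finset.HasAntidiagonal.antidiagonal E := by
    intro p hp
    obtain ⟨i, hi, rfl⟩ := Finset.mem_image.mp hp
    rw [Finset.HasAntidiagonal.mem_antidiagonal]
    exact add_tsub_cancel_of_le (hle i hi)
  rw [← Finset.sum_subset himg]
  · rw [Finset.sum_image]
    intro i hi j hj hij
    exact hinj hi hj (congrArg Prod.fst hij)
  · intro p hp hnp
    by_contra hne
    have h1 : MvPolynomial.coeff p.1 P ≠ 0 := fun h => hne (by simp [h])
    have hE : p.1 + p.2 = E := Finset.HasAntidiagonal.mem_antidiagonal.mp hp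
    obtain ⟨i, hi, hfi⟩ := hsurj p.1 (hE ▸ le_add_of_nonneg_right zero_le) h1
    apply hnp
    rw [Finset.mem_image]
    exact ⟨i, hi, by rw [hfi, ← hE, add_tsub_cancel_left]⟩

lemma gPoly_vars (d m n : ℕ) : (gPoly d m n).vars ⊆ Finset.range (m + n) := by
  refine (vars_prod _).trans ?_
  intro i hi
  obtain ⟨s, hs, hi⟩ := Finset.mem_biUnion.mp hi
  have hi2 := (vars_prod _) hi
  obtain ⟨t, ht, hi3⟩ := Finset.mem_biUnion.mp hi2
  have h4 := vars_pow _ _ hi3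
  have h5 := vars_sub_subset (X s) (q := C qv * X t) h4
  rw [Finset.mem_range]
  rw [Finset.mem_Ico] at hs
  rw [Finset.mem_range] at ht
  rcases Finset.mem_union.mp h5 with h | h
  · rw [vars_X] at h
    simp only [Finset.mem_singleton] at h
    omega
  · have := vars_mul (C qv) (X t) h
    rcases Finset.mem_union.mp this with h' | h'
    · rw [vars_C] at h'; exact absurd h' (Finset.notMem_empty i)
    · rw [vars_X] at h'
      simp only [Finset.mem_singleton] at h'
      omega

lemma coeff_gPoly_eq_zero (d m n : ℕ) {e : ℕ →₀ ℕ} {i : ℕ} (hi : m + n ≤ i)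
    (he : e i ≠ 0) : MvPolynomial.coeff e (gPoly d m n) = 0 := by
  by_contra h
  have h1 : e ∈ (gPoly d m n).support := by rwa [MvPolynomial.mem_support_iff]
  have h2 : i ∈ (gPoly d m n).vars := (mem_vars i).mpr ⟨e, h1, Finsupp.mem_support_iff.mpr he⟩
  have := gPoly_vars d m n h2
  rw [Finset.mem_range] at this
  omega

lemma gPoly_mul (d l m n : ℕ) :
    gPoly d l m * gPoly d (l + m) n
      = gPoly d l (m + n) * rename (l + ·) (gPoly d m n) := by
  have e1 : Finset.Ico (m + l) (m + n + l) = Finset.Ico (l + m) (l + m + n) := by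
    rw [show m + l = l + m from by omega, show m + n + l = l + m + n from by omega]
  have e2 : Finset.Ico (0 + l) (m + l) = Finset.Ico l (l + m) := by
    rw [show 0 + l = l from by omega, show m + l = l + m from by omega]
  have hre : rename (l + ·) (gPoly d m n)
      = ∏ s ∈ Finset.Ico (l + m) (l + m + n), ∏ t ∈ Finset.Ico l (l + m),
          (X s - C qv * X t) ^ (d - 1) := by
    rw [gPoly, map_prod]
    have : ∀ s, (rename (l + ·) (∏ t ∈ Finset.range m, (X s - C qv * X t) ^ (d - 1)))
        = ∏ t ∈ Finset.Ico l (l + m), (X (l + s) - C qv * X t) ^ (d - 1) := by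
      intro s
      rw [map_prod, Finset.range_eq_Ico, ← e2,
        ← Finset.prod_Ico_add (fun t => (X (l + s) - C qv * X t) ^ (d - 1)) 0 m l]
      refine Finset.prod_congr rfl fun t _ => ?_
      simp [map_pow]
    rw [Finset.prod_congr rfl fun s _ => this s, ← e1,
      ← Finset.prod_Ico_add (fun s => ∏ t ∈ Finset.Ico l (l + m),
        (X s - C qv * X t) ^ (d - 1)) m (m + n) l]
  rw [hre]
  have hsplit : gPoly d (l + m) n
      = (∏ s ∈ Finset.Ico (l + m) (l + m + n), ∏ t ∈ Finset.range l,
          (X s - C qv * X t) ^ (d - 1)) *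
        (∏ s ∈ Finset.Ico (l + m) (l + m + n), ∏ t ∈ Finset.Ico l (l + m),
          (X s - C qv * X t) ^ (d - 1)) := by
    rw [gPoly, ← Finset.prod_mul_distrib]
    refine Finset.prod_congr rfl fun s _ => ?_
    rw [Finset.range_eq_Ico,
      ← Finset.prod_Ico_consecutive _ (Nat.zero_le l) (Nat.le_add_right l m)]
    rw [Finset.range_eq_Ico]
  have hsplit2 : gPoly d l (m + n)
      = gPoly d l m * ∏ s ∈ Finset.Ico (l + m) (l + m + n), ∏ t ∈ Finset.range l,
          (X s - C qv * X t) ^ (d - 1) := by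
    rw [gPoly, gPoly, show l + (m + n) = l + m + n from by omega,
      ← Finset.prod_Ico_consecutive _ (Nat.le_add_right l m) (Nat.le_add_right (l+m) n)]
  rw [hsplit, hsplit2]
  ring

/-- Lemma 3.1:
`∑_{a₁+a₂=a, b₁+b₂=b} c_{l,m}^{a₁,b₁} c_{l+m,n}^{(a₂,b₂),c}
 = ∑_{c₁+c₂=c, b₁+b₂=b} c_{l,m+n}^{a,(b₂,c₂)} c_{m,n}^{b₁,c₁}`. -/
theorem coefficient_equality (d l m n : ℕ) (hd : 0 < d) (hl : 0 < l) (hm : 0 < m)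
    (hn : 0 < n) (a : Fin l → ℕ) (b : Fin m → ℕ) (c : Fin n → ℕ) :
    ∑ a₁ ∈ Finset.Iic a, ∑ b₁ ∈ Finset.Iic b,
      cf d l m a₁ b₁ * cf d (l + m) n (Fin.append (a - a₁) (b - b₁)) c
    = ∑ c₁ ∈ Finset.Iic c, ∑ b₁ ∈ Finset.Iic b,
        cf d l (m + n) a (Fin.append (b - b₁) (c - c₁)) * cf d m n b₁ c₁ := by
  set E : ℕ →₀ ℕ := expo a b + tailE (l + m) c with hE
  -- values of E
  have hEa : ∀ i : Fin l, E (i : ℕ) = a i := fun i => by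
    rw [hE, Finsupp.add_apply, expo_apply₁, tailE_apply_lt _ _ (by omega)]; simp
  have hEb : ∀ j : Fin m, E (l + (j : ℕ)) = b j := fun j => by
    rw [hE, Finsupp.add_apply, expo_apply₂, tailE_apply_lt _ _ (by omega)]; simp
  have hEc : ∀ k : Fin n, E (l + m + (k : ℕ)) = c k := fun k => by
    rw [hE, Finsupp.add_apply, expo_apply₃ _ _ (by omega), tailE_apply₂]; simp
  -- Left-hand side
  have hL : ∀ p : (Fin l → ℕ) × (Fin m → ℕ), p.1 ≤ a → p.2 ≤ b →
      E = expo p.1 p.2 + (expo (a - p.1) (b - p.2) + tailE (l + m) c) := by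
    intro p h1 h2
    have ha : p.1 + (a - p.1) = a := funext fun i => Nat.add_sub_cancel' (h1 i)
    have hb : p.2 + (b - p.2) = b := funext fun j => Nat.add_sub_cancel' (h2 j)
    have := expo_add p.1 (a - p.1) p.2 (b - p.2)
    rw [ha, hb] at this
    rw [hE, ← add_assoc, ← this]
  have hLHS : MvPolynomial.coeff E (gPoly d l m * gPoly d (l + m) n)
      = ∑ a₁ ∈ Finset.Iic a, ∑ b₁ ∈ Finset.Iic b,
          cf d l m a₁ b₁ * cf d (l + m) n (Fin.append (a - a₁) (b - b₁)) c := by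
    have hle : ∀ p ∈ Finset.Iic a ×ˢ Finset.Iic b,
        (fun p : (Fin l → ℕ) × (Fin m → ℕ) => expo p.1 p.2) p ≤ E := by
      intro p hp
      rw [Finset.mem_product, Finset.mem_Iic, Finset.mem_Iic] at hp
      rw [hL p hp.1 hp.2]; exact le_self_add
    have hinj : Set.InjOn (fun p : (Fin l → ℕ) × (Fin m → ℕ) => expo p.1 p.2)
        ((Finset.Iic a ×ˢ Finset.Iic b : Finset _) : Set _) := by
      intro p hp q hq hpq
      simp only at hpq
      rw [Prod.ext_iff]
      constructor
      · funext i
        rw [← expo_apply₁ p.1 p.2 i, ← expo_apply₁ q.1 q.2 i, hpq]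
      · funext j
        rw [← expo_apply₂ p.1 p.2 j, ← expo_apply₂ q.1 q.2 j, hpq]
    have hsurj : ∀ e ≤ E, MvPolynomial.coeff e (gPoly d l m) ≠ 0 →
        ∃ p ∈ Finset.Iic a ×ˢ Finset.Iic b,
          (fun p : (Fin l → ℕ) × (Fin m → ℕ) => expo p.1 p.2) p = e := by
      intro e he hne
      refine ⟨(fun i => e (i : ℕ), fun j => e (l + (j : ℕ))), ?_, ?_⟩
      · rw [Finset.mem_product, Finset.mem_Iic, Finset.mem_Iic]
        constructor
        · intro i; calc e (i : ℕ) ≤ E (i : ℕ) := he _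
            _ = a i := hEa i
        · intro j; calc e (l + (j : ℕ)) ≤ E (l + (j : ℕ)) := he _
            _ = b j := hEb j
      · ext j
        rcases lt_or_ge j l with h | h
        · exact expo_apply₁ _ _ (⟨j, h⟩ : Fin l)
        · rcases lt_or_ge j (l + m) with h' | h'
          · have hj : j = l + ((⟨j - l, by omega⟩ : Fin m) : ℕ) := by simp; omega
            rw [hj, expo_apply₂]
          · rw [expo_apply₃ _ _ h']
            by_contra hz
            exact hne (coeff_gPoly_eq_zero d l m h' fun hh => hz hh.symm)
    rw [coeff_mul_eq_sum _ _ _ _ _ hle hinj hsurj, Finset.sum_product]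
    refine Finset.sum_congr rfl fun a₁ ha₁ => Finset.sum_congr rfl fun b₁ hb₁ => ?_
    rw [Finset.mem_Iic] at ha₁ hb₁
    have hsub : E - expo a₁ b₁ = expo (Fin.append (a - a₁) (b - b₁)) c := by
      rw [expo_append_left, hL (a₁, b₁) ha₁ hb₁, add_tsub_cancel_left]
    rw [hsub]; rfl
  -- Right-hand side
  have hR : ∀ p : (Fin n → ℕ) × (Fin m → ℕ), p.1 ≤ c → p.2 ≤ b →
      E = (expo a (b - p.2) + tailE (l + m) (c - p.1))
          + (tailE l p.2 + tailE (l + m) p.1) := by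
    intro p h1 h2
    have hbb : (b - p.2) + p.2 = b := funext fun j => Nat.sub_add_cancel (h2 j)
    have hcc : (c - p.1) + p.1 = c := funext fun k => Nat.sub_add_cancel (h1 k)
    have hb : expo a b = expo a (b - p.2) + tailE l p.2 := by
      have h0 : (0 : Fin l → ℕ) = 0 + 0 := by simp
      have := expo_add a 0 (b - p.2) p.2
      rw [add_zero, hbb] at this
      rw [this, tailE]
    have hc : tailE (l + m) c = tailE (l + m) (c - p.1) + tailE (l + m) p.1 := by
      rw [← tailE_add, hcc]
    rw [hE, hb, hc]
    abel
  have hRHS : MvPolynomial.coeff E (gPoly d l m * gPoly d (l + m) n)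
      = ∑ c₁ ∈ Finset.Iic c, ∑ b₁ ∈ Finset.Iic b,
          cf d l (m + n) a (Fin.append (b - b₁) (c - c₁)) * cf d m n b₁ c₁ := by
    rw [gPoly_mul, mul_comm]
    have hle : ∀ p ∈ Finset.Iic c ×ˢ Finset.Iic b,
        (fun p : (Fin n → ℕ) × (Fin m → ℕ) => tailE l p.2 + tailE (l + m) p.1) p ≤ E := by
      intro p hp
      rw [Finset.mem_product, Finset.mem_Iic, Finset.mem_Iic] at hp
      rw [hR p hp.1 hp.2]; exact le_add_self
    have hinj : Set.InjOn
        (fun p : (Fin n → ℕ) × (Fin m → ℕ) => tailE l p.2 + tailE (l + m) p.1)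
        ((Finset.Iic c ×ˢ Finset.Iic b : Finset _) : Set _) := by
      intro p hp q hq hpq
      simp only at hpq
      rw [Prod.ext_iff]
      constructor
      · funext k
        have h1 : (tailE l p.2 + tailE (l + m) p.1) (l + m + (k : ℕ)) = p.1 k := by
          rw [Finsupp.add_apply, tailE_apply₂, tailE_apply₃ _ _ (by omega)]; simp
        have h2 : (tailE l q.2 + tailE (l + m) q.1) (l + m + (k : ℕ)) = q.1 k := by
          rw [Finsupp.add_apply, tailE_apply₂, tailE_apply₃ _ _ (by omega)]; simp
        rw [← h1, ← h2, hpq]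
      · funext j
        have h1 : (tailE l p.2 + tailE (l + m) p.1) (l + (j : ℕ)) = p.2 j := by
          rw [Finsupp.add_apply, tailE_apply₂, tailE_apply_lt _ _ (by omega)]; simp
        have h2 : (tailE l q.2 + tailE (l + m) q.1) (l + (j : ℕ)) = q.2 j := by
          rw [Finsupp.add_apply, tailE_apply₂, tailE_apply_lt _ _ (by omega)]; simp
        rw [← h1, ← h2, hpq]
    have hinjl : Function.Injective (l + ·) := fun x y h => by
      simpa using Nat.add_left_cancel h
    have hsurj : ∀ e ≤ E, MvPolynomial.coeff e (rename (l + ·) (gPoly d m n)) ≠ 0 →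
        ∃ p ∈ Finset.Iic c ×ˢ Finset.Iic b,
          (fun p : (Fin n → ℕ) × (Fin m → ℕ) => tailE l p.2 + tailE (l + m) p.1) p = e := by
      intro e he hne
      obtain ⟨u, hu, hu0⟩ := coeff_rename_ne_zero _ _ _ hne
      refine ⟨(fun k => e (l + m + (k : ℕ)), fun j => e (l + (j : ℕ))), ?_, ?_⟩
      · rw [Finset.mem_product, Finset.mem_Iic, Finset.mem_Iic]
        constructor
        · intro k; calc e (l + m + (k : ℕ)) ≤ E (l + m + (k : ℕ)) := he _
            _ = c k := hEc k
        · intro j; calc e (l + (j : ℕ)) ≤ E (l + (j : ℕ)) := he _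
            _ = b j := hEb j
      · ext j
        rw [Finsupp.add_apply]
        rcases lt_or_ge j l with h | h
        · rw [tailE_apply_lt _ _ h, tailE_apply_lt _ _ (by omega), ← hu,
            Finsupp.mapDomain_notin_range _ _
              (by rintro ⟨x, rfl⟩; exact Nat.not_lt.mpr (Nat.le_add_right l x) h)]
          simp
        · rcases lt_or_ge j (l + m) with h' | h'
          · have hj : j = l + ((⟨j - l, by omega⟩ : Fin m) : ℕ) := by simp; omega
            rw [hj, tailE_apply₂, tailE_apply_lt _ _ (by simp <;> omega)]
            simp
          · rcases lt_or_ge j (l + m + n) with h'' | h''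
            · have hj : j = l + m + ((⟨j - (l + m), by omega⟩ : Fin n) : ℕ) := by simp; omega
              rw [hj, tailE_apply₂, tailE_apply₃ _ _ (by simp <;> omega)]
              simp
            · rw [tailE_apply₃ _ _ (by omega), tailE_apply₃ _ _ (by omega), ← hu]
              have hj : j = l + (j - l) := by omega
              rw [hj, Finsupp.mapDomain_apply hinjl]
              by_contra hz
              exact hu0 (coeff_gPoly_eq_zero d m n (i := j - l) (by omega)
                fun hh => hz (by simp [hh]))
    rw [coeff_mul_eq_sum _ _ _ _ _ hle hinj hsurj, Finset.sum_product]
    refine Finset.sum_congr rfl fun c₁ hc₁ => Finset.sum_congr rfl fun b₁ hb₁ => ?_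
    rw [Finset.mem_Iic] at hc₁ hb₁
    have hsub : E - (tailE l b₁ + tailE (l + m) c₁)
        = expo a (Fin.append (b - b₁) (c - c₁)) := by
      rw [expo_append_right, hR (c₁, b₁) hc₁ hb₁, add_tsub_cancel_right]
    have hcoe : MvPolynomial.coeff (tailE l b₁ + tailE (l + m) c₁)
        (rename (l + ·) (gPoly d m n)) = cf d m n b₁ c₁ := by
      rw [← mapDomain_expo, coeff_rename_mapDomain _ hinjl]
      rfl
    rw [hsub, hcoe, mul_comm]
    rfl
  rw [← hLHS, hRHS]

end
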